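/- Let h(v) = v/√(c² - v²) on (0, c) with c = n₁kdθ > 0, and for 1 ≤ j ≤ N let σ_j ∈ (π/2+(j-1)π, π/2+jπ) satisfy tan(σ_j) = -h(σ_j). Then the sequence j ↦ σ_j - jπ is strictly decreasing and contained in (-π/2, 0). -/
import Mathlib


open Real

private lemma h_lt_h (c a b : ℝ) (ha : 0 < a) (hab : a < b) (hbc : b < c) :
    a / Real.sqrt (c ^ 2 - a ^ 2) < b / Real.sqrt (c ^ 2 - b ^ 2) := by
  have hb : 0 < b := ha.trans hab
  have hb2 : b ^ 2 < c ^ 2 := by nlinarith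
  have ha2 : a ^ 2 < c ^ 2 := by nlinarith
  have hsb : 0 < Real.sqrt (c ^ 2 - b ^ 2) := Real.sqrt_pos.2 (by linarith)
  have hsa : 0 < Real.sqrt (c ^ 2 - a ^ 2) := Real.sqrt_pos.2 (by linarith)
  have hle : Real.sqrt (c ^ 2 - b ^ 2) ≤ Real.sqrt (c ^ 2 - a ^ 2) :=
    Real.sqrt_le_sqrt (by nlinarith)
  calc a / Real.sqrt (c ^ 2 - a ^ 2) ≤ a / Real.sqrt (c ^ 2 - b ^ 2) :=
        div_le_div_of_nonneg_left ha.le hsb hle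
    _ < b / Real.sqrt (c ^ 2 - b ^ 2) := by gcongr

private lemma tan_shift (x : ℝ) (j : ℕ) : Real.tan (x + (j : ℝ) * π) = Real.tan x :=
  (Real.tan_periodic.nat_mul j) x

/-- Monotonicity of the Pekeris modal parameters: if `σ_j ∈ (π/2+(j-1)π, π/2+jπ)`
solves `tan σ_j = -σ_j/√(c² - σ_j²)` with `0 < σ_j < c`, then `j ↦ σ_j - jπ` is
contained in `(-π/2, 0)` and strictly decreasing. -/
theorem stmt_19 (c : ℝ) (hc : 0 < c) (N : ℕ) (σ : ℕ → ℝ)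
    (hσmem : ∀ j : ℕ, 1 ≤ j → j ≤ N →
      π / 2 + ((j : ℝ) - 1) * π < σ j ∧ σ j < π / 2 + (j : ℝ) * π ∧
        0 < σ j ∧ σ j < c)
    (hσeq : ∀ j : ℕ, 1 ≤ j → j ≤ N →
      Real.tan (σ j) = - (σ j / Real.sqrt (c ^ 2 - σ j ^ 2))) :
    (∀ j : ℕ, 1 ≤ j → j ≤ N →
      -(π / 2) < σ j - (j : ℝ) * π ∧ σ j - (j : ℝ) * π < 0) ∧
    (∀ j : ℕ, 1 ≤ j → j + 1 ≤ N →
      σ (j + 1) - ((j : ℝ) + 1) * π < σ j - (j : ℝ) * π) := by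
  have hpi := Real.pi_pos
  -- key facts for each valid j
  have key : ∀ j : ℕ, 1 ≤ j → j ≤ N →
      (-(π / 2) < σ j - (j : ℝ) * π ∧ σ j - (j : ℝ) * π < 0) ∧
      Real.tan (σ j - (j : ℝ) * π) = - (σ j / Real.sqrt (c ^ 2 - σ j ^ 2)) := by
    intro j h1 h2
    obtain ⟨hl, hr, hpos, hlt⟩ := hσmem j h1 h2
    have hgt : -(π / 2) < σ j - (j : ℝ) * π := by
      have : π / 2 + ((j : ℝ) - 1) * π = (j : ℝ) * π - π / 2 := by ring
      linarith [this ▸ hl]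
    have hlt2 : σ j - (j : ℝ) * π < π / 2 := by linarith
    have htan : Real.tan (σ j - (j : ℝ) * π) = - (σ j / Real.sqrt (c ^ 2 - σ j ^ 2)) := by
      rw [← hσeq j h1 h2, ← tan_shift (σ j - (j : ℝ) * π) j]
      ring_nf
    have hsq : 0 < Real.sqrt (c ^ 2 - σ j ^ 2) := by
      apply Real.sqrt_pos.2; nlinarith
    have htneg : Real.tan (σ j - (j : ℝ) * π) < 0 := by
      rw [htan]
      exact neg_neg_iff_pos.2 (div_pos hpos hsq)
    have hneg : σ j - (j : ℝ) * π < 0 := by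
      by_contra hge
      push_neg at hge
      have h0 : (0:ℝ) ∈ Set.Ioo (-(π / 2)) (π / 2) := ⟨by linarith, by linarith⟩
      have hmem : σ j - (j : ℝ) * π ∈ Set.Ioo (-(π / 2)) (π / 2) := ⟨hgt, hlt2⟩
      have := Real.strictMonoOn_tan.le_iff_le h0 hmem |>.2 hge
      rw [Real.tan_zero] at this
      linarith
    exact ⟨⟨hgt, hneg⟩, htan⟩
  refine ⟨fun j h1 h2 => (key j h1 h2).1, fun j h1 h2 => ?_⟩
  have h2' : j ≤ N := by omega
  have h1' : 1 ≤ j + 1 := by omega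
  obtain ⟨⟨hgt, hneg⟩, htan⟩ := key j h1 h2'
  obtain ⟨⟨hgt', hneg'⟩, htan'⟩ := key (j + 1) h1' h2
  obtain ⟨hl, hr, hpos, hlt⟩ := hσmem j h1 h2'
  obtain ⟨hl', hr', hpos', hlt'⟩ := hσmem (j + 1) h1' h2
  -- σ (j+1) > σ j
  have hσlt : σ j < σ (j + 1) := by
    push_cast at hl'
    linarith
  have htlt : Real.tan (σ (j + 1) - ((j : ℝ) + 1) * π) < Real.tan (σ j - (j : ℝ) * π) := by
    have hc1 : ((j + 1 : ℕ) : ℝ) = (j : ℝ) + 1 := by push_cast; ring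
    push_cast at htan'
    rw [htan, htan']
    have := h_lt_h c (σ j) (σ (j + 1)) hpos hσlt hlt'
    linarith
  by_contra hge
  push_neg at hge
  have hc1 : ((j + 1 : ℕ) : ℝ) = (j : ℝ) + 1 := by push_cast; ring
  have hmem1 : σ (j + 1) - ((j : ℝ) + 1) * π ∈ Set.Ioo (-(π / 2)) (π / 2) :=
    ⟨hc1 ▸ hgt', by linarith [hc1 ▸ hneg']⟩
  have hmem2 : σ j - (j : ℝ) * π ∈ Set.Ioo (-(π / 2)) (π / 2) := ⟨hgt, by linarith⟩
  have := Real.strictMonoOn_tan.le_iff_le hmem2 hmem1 |>.2 hge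
  linarith
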